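/- Let φ : ℝ → ℝ be strictly convex and differentiable, and let P, Q be probability measures on ℝ with quantile functions F_P^←, F_Q^←. If ∫₀¹ [ φ(F_P^←(x)) − φ(F_Q^←(x)) − φ'(F_Q^←(x))·(F_P^←(x) − F_Q^←(x)) ] dx = 0 (the integral being of a nonnegative integrand), then F_P^←(x) = F_Q^←(x) for Lebesgue-almost all x ∈ (0,1), and consequently P = Q. -/

import Mathlib

open MeasureTheory Set Filter Topology
open scoped ENNReal

/-- Cumulative distribution function of a measure on `ℝ`. -/
noncomputable def cdf (P : Measure ℝ) (z : ℝ) : ℝ := (P (Iic z)).toReal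

/-- Quantile function (generalized inverse of the cdf). -/
noncomputable def quantile (P : Measure ℝ) (x : ℝ) : ℝ := sInf {z : ℝ | x ≤ cdf P z}

lemma cdf_mono (P : Measure ℝ) [IsProbabilityMeasure P] : Monotone (cdf P) := fun _ _ hab =>
  ENNReal.toReal_mono (measure_ne_top _ _) (measure_mono (Iic_subset_Iic.2 hab))

lemma cdf_nonneg (P : Measure ℝ) (z : ℝ) : 0 ≤ cdf P z := ENNReal.toReal_nonneg

lemma cdf_le_one (P : Measure ℝ) [IsProbabilityMeasure P] (z : ℝ) : cdf P z ≤ 1 := by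
  have h : P (Iic z) ≤ 1 := prob_le_one
  calc (P (Iic z)).toReal ≤ (1 : ℝ≥0∞).toReal := ENNReal.toReal_mono (by simp) h
    _ = 1 := by simp

lemma quantile_set_nonempty (P : Measure ℝ) [IsProbabilityMeasure P] {x : ℝ} (h1 : x < 1) :
    {z : ℝ | x ≤ cdf P z}.Nonempty := by
  have ht : Tendsto (fun z : ℝ => P (Iic z)) atTop (𝓝 (P univ)) := tendsto_measure_Iic_atTop P
  rw [measure_univ] at ht
  have hlt : ENNReal.ofReal x < 1 := by
    rcases le_or_gt x 0 with hx | hx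
    · simp [ENNReal.ofReal_eq_zero.2 hx]
    · rw [show (1:ℝ≥0∞) = ENNReal.ofReal 1 by simp]
      exact (ENNReal.ofReal_lt_ofReal_iff (by norm_num)).2 h1
  obtain ⟨z, hz⟩ := (ht.eventually_const_lt hlt).exists
  refine ⟨z, ?_⟩
  have := (ENNReal.ofReal_le_iff_le_toReal (measure_ne_top P _)).1 hz.le
  simpa [cdf] using this

lemma quantile_set_bddBelow (P : Measure ℝ) [IsProbabilityMeasure P] {x : ℝ} (h0 : 0 < x) :
    BddBelow {z : ℝ | x ≤ cdf P z} := by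
  have hinter : ⋂ n : ℕ, Iic (-(n:ℝ)) = (∅ : Set ℝ) := by
    ext y; simp only [mem_iInter, mem_Iic, mem_empty_iff_false, iff_false, not_forall, not_le]
    obtain ⟨n, hn⟩ := exists_nat_gt (-y)
    exact ⟨n, by linarith⟩
  have ht : Tendsto (fun n : ℕ => P (Iic (-(n:ℝ)))) atTop (𝓝 0) := by
    have := tendsto_measure_iInter_atTop (μ := P) (s := fun n : ℕ => Iic (-(n:ℝ)))
      (fun n => measurableSet_Iic.nullMeasurableSet)
      (fun n m hnm => Iic_subset_Iic.2 (neg_le_neg (Nat.cast_le.2 hnm)))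
      ⟨0, measure_ne_top _ _⟩
    rw [hinter] at this
    simpa [Function.comp_def] using this
  have hx : (0:ℝ≥0∞) < ENNReal.ofReal x := ENNReal.ofReal_pos.2 h0
  obtain ⟨n, hn⟩ := (ht.eventually_lt_const hx).exists
  refine ⟨-(n:ℝ), fun z hz => ?_⟩
  by_contra hlt
  push_neg at hlt
  have h1 : cdf P z ≤ cdf P (-(n:ℝ)) := cdf_mono P hlt.le
  have h2 : cdf P (-(n:ℝ)) < x := by
    have := ENNReal.toReal_lt_of_lt_ofReal hn
    simpa [cdf] using this
  exact absurd (hz.trans h1) (not_le.2 h2)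

lemma le_cdf_quantile (P : Measure ℝ) [IsProbabilityMeasure P] {x : ℝ}
    (h0 : 0 < x) (h1 : x < 1) : x ≤ cdf P (quantile P x) := by
  set S := {z : ℝ | x ≤ cdf P z} with hS
  have hne : S.Nonempty := quantile_set_nonempty P h1
  have hbdd : BddBelow S := quantile_set_bddBelow P h0
  set q := sInf S with hq
  have key : ∀ n : ℕ, x ≤ cdf P (q + 1/(n+1 : ℝ)) := by
    intro n
    have hpos : (0:ℝ) < 1/(n+1 : ℝ) := by positivity
    obtain ⟨w, hwS, hw⟩ := (csInf_lt_iff hbdd hne).1 (by linarith : sInf S < q + 1/(n+1:ℝ))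
    exact hwS.trans (cdf_mono P hw.le)
  have hinter : ⋂ n : ℕ, Iic (q + 1/(n+1 : ℝ)) = Iic q := by
    ext y
    simp only [mem_iInter, mem_Iic]
    constructor
    · intro h
      by_contra hlt
      push_neg at hlt
      obtain ⟨n, hn⟩ := exists_nat_one_div_lt (by linarith : (0:ℝ) < y - q)
      have := h n
      linarith
    · intro h n
      have hpos : (0:ℝ) < 1/(n+1 : ℝ) := by positivity
      linarith
  have ht : Tendsto (fun n : ℕ => P (Iic (q + 1/(n+1 : ℝ)))) atTop (𝓝 (P (Iic q))) := by
    have := tendsto_measure_iInter_atTop (μ := P) (s := fun n : ℕ => Iic (q + 1/(n+1:ℝ)))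
      (fun n => measurableSet_Iic.nullMeasurableSet)
      (fun n m hnm => Iic_subset_Iic.2 (by
        have h1 : (1:ℝ)/(m+1) ≤ 1/(n+1) := by
          apply one_div_le_one_div_of_le (by positivity)
          have : (n:ℝ) ≤ m := Nat.cast_le.2 hnm
          linarith
        linarith))
      ⟨0, measure_ne_top _ _⟩
    rw [hinter] at this
    simpa [Function.comp_def] using this
  have hle : ENNReal.ofReal x ≤ P (Iic q) :=
    ge_of_tendsto' ht fun n =>
      (ENNReal.ofReal_le_iff_le_toReal (measure_ne_top P _)).2 (key n)
  exact (ENNReal.ofReal_le_iff_le_toReal (measure_ne_top P _)).1 hle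

lemma quantile_le_iff (P : Measure ℝ) [IsProbabilityMeasure P] {x z : ℝ}
    (h0 : 0 < x) (h1 : x < 1) : quantile P x ≤ z ↔ x ≤ cdf P z := by
  constructor
  · intro h
    exact (le_cdf_quantile P h0 h1).trans (cdf_mono P h)
  · intro h
    exact csInf_le (quantile_set_bddBelow P h0) h

lemma quantile_monotoneOn (P : Measure ℝ) [IsProbabilityMeasure P] :
    MonotoneOn (quantile P) (Ioo (0:ℝ) 1) := by
  intro a ha b hb hab
  exact csInf_le_csInf (quantile_set_bddBelow P ha.1) (quantile_set_nonempty P hb.2)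
    (fun z hz => le_trans hab hz)

lemma volume_Iic_inter_Ioo {c : ℝ} (h0 : 0 ≤ c) (h1 : c ≤ 1) :
    volume (Iic c ∩ Ioo (0:ℝ) 1) = ENNReal.ofReal c := by
  rcases lt_or_eq_of_le h1 with hc | hc
  · have hset : Iic c ∩ Ioo (0:ℝ) 1 = Ioc 0 c := by
      ext x
      simp only [mem_inter_iff, mem_Iic, mem_Ioo, mem_Ioc]
      constructor
      · rintro ⟨h₁, h₂, _⟩; exact ⟨h₂, h₁⟩
      · rintro ⟨h₁, h₂⟩; exact ⟨h₂, h₁, lt_of_le_of_lt h₂ hc⟩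
    rw [hset, Real.volume_Ioc, sub_zero]
  · have hset : Iic c ∩ Ioo (0:ℝ) 1 = Ioo 0 1 := by
      ext x
      simp only [mem_inter_iff, mem_Iic, mem_Ioo]
      refine ⟨fun h => h.2, fun h => ⟨?_, h⟩⟩
      rw [hc]; exact h.2.le
    rw [hset, Real.volume_Ioo, hc]
    norm_num

/-- Bregman divergence of a strictly convex differentiable function is strictly positive
off the diagonal. -/
lemma bregman_pos {φ : ℝ → ℝ} (hφ : StrictConvexOn ℝ Set.univ φ) (hd : Differentiable ℝ φ)
    {s t : ℝ} (hst : s ≠ t) : 0 < φ s - φ t - deriv φ t * (s - t) := by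
  rcases lt_or_gt_of_ne hst with h | h
  · -- s < t : slope φ s t < deriv φ t
    have hs := hφ.slope_lt_deriv (mem_univ s) (mem_univ t) h (hd t)
    rw [slope_def_field, div_lt_iff₀ (by linarith : (0:ℝ) < t - s)] at hs
    nlinarith
  · -- t < s : deriv φ t < slope φ t s
    have hs := hφ.deriv_lt_slope (mem_univ t) (mem_univ s) h (hd t)
    rw [slope_def_field, lt_div_iff₀ (by linarith : (0:ℝ) < s - t)] at hs
    nlinarith

/-- If the (nonnegative-integrand) Bregman divergence between the quantile
functions of `P` and `Q` vanishes, then the quantile functions agree Lebesgue-a.e. on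
`(0,1)`, and consequently `P = Q`. -/
theorem stmt15 (φ : ℝ → ℝ) (hφ : StrictConvexOn ℝ Set.univ φ) (hd : Differentiable ℝ φ)
    (P Q : Measure ℝ) [IsProbabilityMeasure P] [IsProbabilityMeasure Q]
    (hzero : ∫⁻ x in Ioo (0:ℝ) 1,
        ENNReal.ofReal (φ (quantile P x) - φ (quantile Q x)
          - deriv φ (quantile Q x) * (quantile P x - quantile Q x)) = 0) :
    (∀ᵐ x ∂(volume.restrict (Ioo (0:ℝ) 1)), quantile P x = quantile Q x) ∧ P = Q := by
  set μr := volume.restrict (Ioo (0:ℝ) 1) with hμr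
  -- a.e.-measurability of the integrand
  have hqP : AEMeasurable (quantile P) μr :=
    aemeasurable_restrict_of_monotoneOn measurableSet_Ioo (quantile_monotoneOn P)
  have hqQ : AEMeasurable (quantile Q) μr :=
    aemeasurable_restrict_of_monotoneOn measurableSet_Ioo (quantile_monotoneOn Q)
  have hf : AEMeasurable (fun x => ENNReal.ofReal (φ (quantile P x) - φ (quantile Q x)
      - deriv φ (quantile Q x) * (quantile P x - quantile Q x))) μr := by
    refine ENNReal.measurable_ofReal.comp_aemeasurable ?_
    exact ((hd.continuous.measurable.comp_aemeasurable hqP).sub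
        (hd.continuous.measurable.comp_aemeasurable hqQ)).sub
      (((measurable_deriv φ).comp_aemeasurable hqQ).mul (hqP.sub hqQ))
  have hae0 := (lintegral_eq_zero_iff' hf).1 hzero
  have haeq : ∀ᵐ x ∂μr, quantile P x = quantile Q x := by
    filter_upwards [hae0] with x hx
    rw [Pi.zero_apply, ENNReal.ofReal_eq_zero] at hx
    by_contra hne
    exact absurd hx (not_le.2 (bregman_pos hφ hd hne))
  refine ⟨haeq, ?_⟩
  -- equality of cdfs, hence of measures
  refine Measure.ext_of_Iic P Q (fun z => ?_)
  have hcompute : ∀ (R : Measure ℝ) [IsProbabilityMeasure R],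
      μr {x | quantile R x ≤ z} = ENNReal.ofReal (cdf R z) := by
    intro R _
    rw [hμr, Measure.restrict_apply' measurableSet_Ioo]
    have hset : {x | quantile R x ≤ z} ∩ Ioo (0:ℝ) 1 = Iic (cdf R z) ∩ Ioo (0:ℝ) 1 := by
      ext x
      simp only [mem_inter_iff, mem_setOf_eq, mem_Iic, mem_Ioo, and_congr_left_iff]
      rintro ⟨hx0, hx1⟩
      exact quantile_le_iff R hx0 hx1
    rw [hset]
    exact volume_Iic_inter_Ioo (cdf_nonneg R z) (cdf_le_one R z)
  have hsets : {x | quantile P x ≤ z} =ᵐ[μr] {x | quantile Q x ≤ z} := by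
    filter_upwards [haeq] with x hx
    show (quantile P x ≤ z) = (quantile Q x ≤ z)
    rw [hx]
  have hcdf : ENNReal.ofReal (cdf P z) = ENNReal.ofReal (cdf Q z) := by
    rw [← hcompute P, ← hcompute Q]
    exact measure_congr hsets
  have hP : P (Iic z) = ENNReal.ofReal (cdf P z) :=
    (ENNReal.ofReal_toReal (measure_ne_top P _)).symm
  have hQ : Q (Iic z) = ENNReal.ofReal (cdf Q z) :=
    (ENNReal.ofReal_toReal (measure_ne_top Q _)).symm
  rw [hP, hQ, hcdf]
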